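/- Let (Ω, μ) be a probability space and X a bounded random variable with |X| ≤ B. Then for all λ ≥ B, |λ log E[exp(X/λ)] − E[X]| ≤ e · B²/λ. -/

import Mathlib

open MeasureTheory

theorem stmt17 {Ω : Type*} [MeasurableSpace Ω] (μ : Measure Ω) [IsProbabilityMeasure μ]
    (X : Ω → ℝ) (hX : Measurable X) (B : ℝ) (hB : ∀ ω, |X ω| ≤ B) :
    ∀ l : ℝ, B ≤ l →
      |l * Real.log (∫ ω, Real.exp (X ω / l) ∂μ) - ∫ ω, X ω ∂μ| ≤
        Real.exp 1 * B ^ 2 / l := by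
  intro l hl
  have hne : Nonempty Ω := by
    by_contra h
    rw [not_nonempty_iff] at h
    have h1 : μ Set.univ = 1 := measure_univ
    rw [Set.univ_eq_empty_iff.mpr h, measure_empty] at h1
    exact zero_ne_one h1
  have hB0 : 0 ≤ B := le_trans (abs_nonneg _) (hB (Classical.arbitrary Ω))
  rcases eq_or_lt_of_le hB0 with hB0' | hBpos
  · -- B = 0, so X ≡ 0
    subst hB0'
    have hX0 : X = fun _ => (0 : ℝ) := funext fun ω => abs_nonpos_iff.mp (hB ω)
    subst hX0
    simp
  -- main case: 0 < B ≤ l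
  have hlpos : 0 < l := lt_of_lt_of_le hBpos hl
  have hr1 : B / l ≤ 1 := (div_le_one hlpos).mpr hl
  have ht : ∀ ω, |X ω / l| ≤ B / l := by
    intro ω
    rw [abs_div, abs_of_pos hlpos]
    gcongr
    exact hB ω
  have ht1 : ∀ ω, |X ω / l| ≤ 1 := fun ω => (ht ω).trans hr1
  have hXint : Integrable X μ :=
    (integrable_const B).mono' hX.aestronglyMeasurable
      (Filter.Eventually.of_forall fun ω => by simpa [Real.norm_eq_abs] using hB ω)
  have hexpint : Integrable (fun ω => Real.exp (X ω / l)) μ :=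
    (integrable_const (Real.exp 1)).mono' ((hX.div_const l).exp.aestronglyMeasurable)
      (Filter.Eventually.of_forall fun ω => by
        rw [Real.norm_eq_abs, abs_of_pos (Real.exp_pos _)]
        exact Real.exp_le_exp.2 ((le_abs_self _).trans (ht1 ω)))
  set m := ∫ ω, X ω ∂μ with hm
  set a := m / l with ha
  have hint_a : ∫ ω, X ω / l ∂μ = a := by
    rw [integral_div]
  set I := ∫ ω, Real.exp (X ω / l) ∂μ with hI
  -- lower bound: exp a ≤ I
  have hIlow : Real.exp a ≤ I := by
    have hpt : ∀ ω, Real.exp a + Real.exp a * (X ω / l - a) ≤ Real.exp (X ω / l) := by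
      intro ω
      have h1 : (X ω / l - a) + 1 ≤ Real.exp (X ω / l - a) := Real.add_one_le_exp _
      have h2 : Real.exp a * ((X ω / l - a) + 1) ≤ Real.exp a * Real.exp (X ω / l - a) :=
        mul_le_mul_of_nonneg_left h1 (Real.exp_pos a).le
      rw [← Real.exp_add] at h2
      calc Real.exp a + Real.exp a * (X ω / l - a)
          = Real.exp a * ((X ω / l - a) + 1) := by ring
        _ ≤ Real.exp (a + (X ω / l - a)) := h2
        _ = Real.exp (X ω / l) := by ring_nf
    have hsub : Integrable (fun ω => X ω / l - a) μ := by
      exact (hXint.div_const l).sub (integrable_const a)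
    have hmul : Integrable (fun ω => Real.exp a * (X ω / l - a)) μ := by
      exact hsub.const_mul _
    have hint2 : Integrable (fun ω => Real.exp a + Real.exp a * (X ω / l - a)) μ := by
      exact (integrable_const _).add hmul
    have h0 : ∫ ω, (X ω / l - a) ∂μ = 0 := by
      rw [integral_sub (hXint.div_const l) (integrable_const a), hint_a]
      simp
    have := integral_mono hint2 hexpint hpt
    calc Real.exp a = ∫ ω, (Real.exp a + Real.exp a * (X ω / l - a)) ∂μ := by
          rw [integral_add (integrable_const _) hmul, MeasureTheory.integral_const_mul, h0]
          simp
      _ ≤ I := this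
  have hIpos : 0 < I := lt_of_lt_of_le (Real.exp_pos a) hIlow
  have hloglow : a ≤ Real.log I := (Real.le_log_iff_exp_le hIpos).mpr hIlow
  -- upper bound: I ≤ 1 + a + (3/4) * (B/l)^2
  have hIup : I ≤ 1 + a + (3 / 4) * (B / l) ^ 2 := by
    have hpt : ∀ ω, Real.exp (X ω / l) ≤ 1 + X ω / l + (3 / 4) * (B / l) ^ 2 := by
      intro ω
      have hb := Real.exp_bound (x := X ω / l) (ht1 ω) (n := 2) (by norm_num)
      have hsum : ∑ m ∈ Finset.range 2, (X ω / l) ^ m / (m.factorial : ℝ) = 1 + X ω / l := by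
        simp [Finset.sum_range_succ]
      rw [hsum] at hb
      have h1 : Real.exp (X ω / l) - (1 + X ω / l) ≤ |X ω / l| ^ 2 * ((2 + 1 : ℕ) / ((2:ℕ).factorial * 2)) :=
        (le_abs_self _).trans hb
      have h2 : |X ω / l| ^ 2 * ((2 + 1 : ℕ) / ((2:ℕ).factorial * 2) : ℝ) ≤ (3 / 4) * (B / l) ^ 2 := by
        have : |X ω / l| ^ 2 ≤ (B / l) ^ 2 := by
          apply pow_le_pow_left₀ (abs_nonneg _) (ht ω)
        calc |X ω / l| ^ 2 * ((2 + 1 : ℕ) / ((2:ℕ).factorial * 2) : ℝ)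
            = (3 / 4) * |X ω / l| ^ 2 := by norm_num [Nat.factorial]; ring
          _ ≤ (3 / 4) * (B / l) ^ 2 := by nlinarith
      linarith [h1, h2]
    have h12 : Integrable (fun ω => 1 + X ω / l) μ := by
      exact (integrable_const (1:ℝ)).add (hXint.div_const l)
    have hint2 : Integrable (fun ω => 1 + X ω / l + (3 / 4) * (B / l) ^ 2) μ := by
      exact h12.add (integrable_const _)
    have := integral_mono hexpint hint2 hpt
    calc I ≤ ∫ ω, (1 + X ω / l + (3 / 4) * (B / l) ^ 2) ∂μ := this
      _ = 1 + a + (3 / 4) * (B / l) ^ 2 := by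
          rw [integral_add h12 (integrable_const _),
            integral_add (integrable_const (1:ℝ)) (hXint.div_const l), hint_a]
          simp
  have hlogup : Real.log I ≤ a + (3 / 4) * (B / l) ^ 2 := by
    have := Real.log_le_sub_one_of_pos hIpos
    linarith
  -- conclude
  have hla : l * a = m := by
    rw [ha, mul_div_assoc', mul_comm, mul_div_assoc, div_self hlpos.ne', mul_one]
  have key : |l * Real.log I - m| ≤ (3 / 4) * (B ^ 2 / l) := by
    rw [abs_of_nonneg]
    · have : l * Real.log I - m = l * (Real.log I - a) := by rw [mul_sub, hla]
      rw [this]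
      have h2 : Real.log I - a ≤ (3 / 4) * (B / l) ^ 2 := by linarith
      calc l * (Real.log I - a) ≤ l * ((3 / 4) * (B / l) ^ 2) :=
            mul_le_mul_of_nonneg_left h2 hlpos.le
        _ = (3 / 4) * (B ^ 2 / l) := by field_simp
    · nlinarith [mul_le_mul_of_nonneg_left hloglow hlpos.le]
  have hfinal : (3 / 4 : ℝ) * (B ^ 2 / l) ≤ Real.exp 1 * B ^ 2 / l := by
    have he : (3 / 4 : ℝ) ≤ Real.exp 1 := by
      have := Real.add_one_le_exp 1
      linarith
    have hB2l : 0 ≤ B ^ 2 / l := div_nonneg (sq_nonneg B) hlpos.le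
    calc (3 / 4 : ℝ) * (B ^ 2 / l) ≤ Real.exp 1 * (B ^ 2 / l) :=
          mul_le_mul_of_nonneg_right he hB2l
      _ = Real.exp 1 * B ^ 2 / l := by ring
  exact key.trans hfinal
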